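/- arXiv:2404.09725 — 2 statements merged into one kernel-verified Lean document; each statement's English description precedes it below -/
import Mathlib

section
/- Let ν be a Borel measure on ℝ with ν({0}) = 0 and ∫ min(x²,1) ν(dx) < ∞, and suppose that for some constants M > 0, α ∈ (0,2), ε ∈ (0,1] one has ∫_{[-η,η]} x² ν(dx) ≥ M η^{2-α} for all 0 < η ≤ ε. Then the characteristic function φ_t(u) = exp(t ∫_ℝ (cos(ux) - 1) ν(dx)) of the associated symmetric part satisfies |φ_t(u)| ≤ exp(-(2^α M / π^α) |u|^α t) for all |u| ≥ π/(2ε) and all t > 0. -/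
open Real MeasureTheory

lemma sin_chord_quarter {t : ℝ} (ht : 0 ≤ t) (ht' : t ≤ π / 4) :
    Real.sqrt 2 * (2 * t) / π ≤ Real.sin t := by
  have hπ := Real.pi_pos
  have hb0 : 0 ≤ 4 * t / π := by positivity
  have hb1 : 4 * t / π ≤ 1 := by
    rw [div_le_one hπ]; linarith
  have hmem0 : (0 : ℝ) ∈ Set.Icc 0 π := ⟨le_rfl, hπ.le⟩
  have hmemq : (π / 4 : ℝ) ∈ Set.Icc 0 π := ⟨by positivity, by linarith⟩
  have hcon := strictConcaveOn_sin_Icc.concaveOn.2 hmem0 hmemq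
    (show (0:ℝ) ≤ 1 - 4 * t / π by linarith) hb0
    (show 1 - 4 * t / π + 4 * t / π = 1 by ring)
  have heq : (1 - 4 * t / π) • (0 : ℝ) + (4 * t / π) • (π / 4) = t := by
    simp only [smul_eq_mul]
    field_simp
    ring
  rw [heq] at hcon
  have : (1 - 4 * t / π) • Real.sin 0 + (4 * t / π) • Real.sin (π / 4)
      = Real.sqrt 2 * (2 * t) / π := by
    rw [Real.sin_zero, Real.sin_pi_div_four]
    simp only [smul_eq_mul, mul_zero, zero_add]
    field_simp
    ring
  linarith [this ▸ hcon]

lemma cos_sub_one_le_quad {y : ℝ} (hy : |y| ≤ π / 2) :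
    Real.cos y - 1 ≤ -(4 / π ^ 2) * y ^ 2 := by
  have hπ := Real.pi_pos
  have h1 : Real.cos y - 1 = -2 * Real.sin (y / 2) ^ 2 := by
    have h := Real.sin_sq_eq_half_sub (y / 2)
    have h2 : 2 * (y / 2) = y := by ring
    rw [h2] at h
    linarith
  have habs : Real.sin (y / 2) ^ 2 = Real.sin (|y| / 2) ^ 2 := by
    rcases abs_choice y with h | h
    · rw [h]
    · rw [h]; simp [neg_div, Real.sin_neg]
  have ht : 0 ≤ |y| / 2 := by positivity
  have ht' : |y| / 2 ≤ π / 4 := by linarith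
  have hchord := sin_chord_quarter ht ht'
  have hc0 : 0 ≤ Real.sqrt 2 * (2 * (|y| / 2)) / π := by positivity
  have hsq := pow_le_pow_left₀ hc0 hchord 2
  have h2y : (2 : ℝ) * (|y| / 2) = |y| := by ring
  rw [h2y] at hsq
  have hval : (Real.sqrt 2 * |y| / π) ^ 2 = 2 * y ^ 2 / π ^ 2 := by
    rw [div_pow, mul_pow, Real.sq_sqrt (by norm_num : (0:ℝ) ≤ 2), sq_abs]
  rw [hval] at hsq
  rw [h1, habs]
  have hkey : -(4 / π ^ 2) * y ^ 2 = -2 * (2 * y ^ 2 / π ^ 2) := by ring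
  rw [hkey]
  linarith

lemma rpow_arith_aux (M α v : ℝ) (hv : 0 < v) (hα : 0 < α) (hα2 : α < 2) :
    (-(4 / π ^ 2) * v ^ 2) * (M * (π / (2 * v)) ^ (2 - α))
      = -(2 ^ α * M / π ^ α) * v ^ α := by
  have hπ := Real.pi_pos
  have h1 : (π / (2 * v)) ^ (2 - α) = π ^ (2 - α) / (2 * v) ^ (2 - α) :=
    Real.div_rpow hπ.le (by positivity) _
  have h2 : π ^ (2 - α) = π ^ (2 : ℕ) / π ^ α := by
    rw [Real.rpow_sub hπ]
    norm_num [Real.rpow_two]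
  have h3 : (2 * v) ^ (2 - α) = (2 * v) ^ (2 : ℕ) / ((2 : ℝ) ^ α * v ^ α) := by
    rw [Real.rpow_sub (by positivity), Real.rpow_two,
      Real.mul_rpow (by norm_num) hv.le]
  have hπα : (0:ℝ) < π ^ α := Real.rpow_pos_of_pos hπ α
  have h2α : (0:ℝ) < (2:ℝ) ^ α := Real.rpow_pos_of_pos (by norm_num) α
  have hvα : (0:ℝ) < v ^ α := Real.rpow_pos_of_pos hv α
  rw [h1, h2, h3]
  field_simp
  ring

theorem charFun_decay_of_levy_lower_bound
    (ν : Measure ℝ) (M α ε : ℝ)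
    (hM : 0 < M) (hα : 0 < α) (hα2 : α < 2) (hε : 0 < ε) (hε1 : ε ≤ 1)
    (hν0 : ν {0} = 0)
    (hνint : Integrable (fun x => min (x ^ 2) 1) ν)
    (hlow : ∀ η : ℝ, 0 < η → η ≤ ε →
      M * η ^ (2 - α) ≤ ∫ x in Set.Icc (-η) η, x ^ 2 ∂ν) :
    ∀ t : ℝ, 0 < t → ∀ u : ℝ, π / (2 * ε) ≤ |u| →
      Real.exp (t * ∫ x, (Real.cos (u * x) - 1) ∂ν)
        ≤ Real.exp (-(2 ^ α * M / π ^ α) * |u| ^ α * t) := by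
  intro t ht u hu
  have hπ := Real.pi_pos
  have hu0 : 0 < |u| := lt_of_lt_of_le (by positivity) hu
  set η : ℝ := π / (2 * |u|) with hηdef
  have hη : 0 < η := by positivity
  have hπle : π ≤ |u| * (2 * ε) := (div_le_iff₀ (by positivity)).mp hu
  have hηε : η ≤ ε := by
    rw [hηdef, div_le_iff₀ (by positivity)]
    linarith
  -- integrability of the integrand
  have hcont : Continuous fun x : ℝ => Real.cos (u * x) - 1 :=
    (Real.continuous_cos.comp (continuous_const.mul continuous_id)).sub
      continuous_const
  have hbound : ∀ x : ℝ, ‖Real.cos (u * x) - 1‖ ≤ (u ^ 2 + 2) * min (x ^ 2) 1 := by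
    intro x
    have hc1 : Real.cos (u * x) ≤ 1 := Real.cos_le_one _
    have habs : ‖Real.cos (u * x) - 1‖ = 1 - Real.cos (u * x) := by
      rw [Real.norm_eq_abs, abs_of_nonpos (by linarith)]; ring
    rw [habs]
    have hq : 1 - Real.cos (u * x) ≤ (u * x) ^ 2 / 2 := by
      have := Real.one_sub_sq_div_two_le_cos (x := u * x); linarith
    have h2 : 1 - Real.cos (u * x) ≤ 2 := by
      have := Real.neg_one_le_cos (u * x); linarith
    rcases le_or_gt (x ^ 2) 1 with h | h
    · rw [min_eq_left h]
      nlinarith [sq_nonneg x, sq_nonneg u, sq_nonneg (u * x), mul_pow u x 2]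
    · rw [min_eq_right h.le]
      nlinarith [sq_nonneg u]
  have hint : Integrable (fun x => Real.cos (u * x) - 1) ν :=
    (hνint.const_mul (u ^ 2 + 2)).mono' hcont.aestronglyMeasurable
      (ae_of_all _ hbound)
  have hS : MeasurableSet (Set.Icc (-η) η) := measurableSet_Icc
  -- integrability of x^2 on the interval
  have hx2 : IntegrableOn (fun x : ℝ => x ^ 2) (Set.Icc (-η) η) ν := by
    refine (hνint.integrableOn).congr_fun (fun x hx => ?_) hS
    have hxη : |x| ≤ η := abs_le.mpr ⟨hx.1, hx.2⟩
    have hx1 : x ^ 2 ≤ 1 := by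
      have h1 : |x| ≤ 1 := le_trans hxη (le_trans hηε hε1)
      nlinarith [abs_nonneg x, sq_abs x]
    simp [min_eq_left hx1]
  set c : ℝ := -(4 / π ^ 2) * u ^ 2 with hcdef
  have hc0 : c ≤ 0 := by
    have : (0:ℝ) ≤ 4 / π ^ 2 * u ^ 2 := by positivity
    simp only [hcdef, neg_mul]; linarith
  -- pointwise bound on the interval
  have hpt : ∀ x ∈ Set.Icc (-η) η, Real.cos (u * x) - 1 ≤ c * x ^ 2 := by
    intro x hx
    have hxη : |x| ≤ η := abs_le.mpr ⟨hx.1, hx.2⟩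
    have h1 : |u * x| ≤ π / 2 := by
      rw [abs_mul]
      calc |u| * |x| ≤ |u| * η := by gcongr
        _ = π / 2 := by rw [hηdef]; field_simp
    have h2 := cos_sub_one_le_quad h1
    have h3 : -(4 / π ^ 2) * (u * x) ^ 2 = c * x ^ 2 := by
      rw [hcdef]; ring
    linarith [h3 ▸ h2]
  -- split the integral
  have hsplit : (∫ x in Set.Icc (-η) η, (Real.cos (u * x) - 1) ∂ν)
      + ∫ x in (Set.Icc (-η) η)ᶜ, (Real.cos (u * x) - 1) ∂ν
      = ∫ x, (Real.cos (u * x) - 1) ∂ν := integral_add_compl hS hint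
  have hcompl : (∫ x in (Set.Icc (-η) η)ᶜ, (Real.cos (u * x) - 1) ∂ν) ≤ 0 :=
    integral_nonpos fun x => sub_nonpos.mpr (Real.cos_le_one (u * x))
  have hmono : (∫ x in Set.Icc (-η) η, (Real.cos (u * x) - 1) ∂ν)
      ≤ ∫ x in Set.Icc (-η) η, c * x ^ 2 ∂ν :=
    setIntegral_mono_on hint.integrableOn (hx2.const_mul c) hS hpt
  have hpull : (∫ x in Set.Icc (-η) η, c * x ^ 2 ∂ν)
      = c * ∫ x in Set.Icc (-η) η, x ^ 2 ∂ν := integral_const_mul c _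
  have hlow' := hlow η hη hηε
  have hcm : c * ∫ x in Set.Icc (-η) η, x ^ 2 ∂ν ≤ c * (M * η ^ (2 - α)) :=
    mul_le_mul_of_nonpos_left hlow' hc0
  have harith : c * (M * η ^ (2 - α)) = -(2 ^ α * M / π ^ α) * |u| ^ α := by
    rw [hcdef, hηdef, ← sq_abs u]
    exact rpow_arith_aux M α |u| hu0 hα hα2
  have hfinal : (∫ x, (Real.cos (u * x) - 1) ∂ν)
      ≤ -(2 ^ α * M / π ^ α) * |u| ^ α := by
    rw [← harith, ← hsplit]
    linarith [hpull ▸ hmono]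
  rw [Real.exp_le_exp]
  calc t * ∫ x, (Real.cos (u * x) - 1) ∂ν
      ≤ t * (-(2 ^ α * M / π ^ α) * |u| ^ α) :=
        mul_le_mul_of_nonneg_left hfinal ht.le
    _ = -(2 ^ α * M / π ^ α) * |u| ^ α * t := by ring
end

section
/- Let φ_Y be the characteristic function of a real random variable Y and λ, Δ > 0 with λΔ ≤ 1. Let φ_X = φ_Z · exp(λΔ(φ_Y − 1)) for some characteristic function φ_Z (of the small-jump part), with both |φ_X|, |φ_Z| ≤ 1. Then for any m > 0, (1/(2π))∫_{-m}^m |φ_X(u)|² · |1 − exp(λΔ(1−φ_Y(u)))|² du ≤ (2e⁴(λΔ)²/π) ∫_ℝ |φ_X(u)|² du. -/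
open Real MeasureTheory ProbabilityTheory

theorem extra_bias_term_bound
    {Ω : Type*} [MeasureSpace Ω] [IsProbabilityMeasure (ℙ : Measure Ω)]
    (Y : Ω → ℝ) (hY : Measurable Y)
    (φY : ℝ → ℂ) (hφY : ∀ u : ℝ, φY u = ∫ ω, Complex.exp (u * Y ω * Complex.I))
    (lam Δ : ℝ) (hlam : 0 < lam) (hΔ : 0 < Δ) (hlamΔ : lam * Δ ≤ 1)
    (φX φZ : ℝ → ℂ)
    (hfac : ∀ u, φX u = φZ u * Complex.exp (lam * Δ * (φY u - 1)))
    (hX1 : ∀ u, ‖φX u‖ ≤ 1) (hZ1 : ∀ u, ‖φZ u‖ ≤ 1)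
    (hInt : Integrable (fun u : ℝ => ‖φX u‖ ^ 2))
    (m : ℝ) (hm : 0 < m) :
    (1 / (2 * π)) * ∫ u in (-m)..m,
        ‖φX u‖ ^ 2 * ‖1 - Complex.exp (lam * Δ * (1 - φY u))‖ ^ 2
      ≤ (2 * Real.exp 4 * (lam * Δ) ^ 2 / π) * ∫ u : ℝ, ‖φX u‖ ^ 2 := by
  have hπ : 0 < π := Real.pi_pos
  have hld : 0 < lam * Δ := mul_pos hlam hΔ
  have hnorm1 : ∀ (u x : ℝ), ‖Complex.exp (u * x * Complex.I)‖ = 1 := by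
    intro u x
    have h : ((u : ℂ) * x * Complex.I) = ((u * x : ℝ) : ℂ) * Complex.I := by
      push_cast; ring
    rw [h]
    exact Complex.norm_exp_ofReal_mul_I (u * x)
  -- φY is continuous
  have hcontF : Continuous fun u : ℝ => ∫ ω, Complex.exp (u * Y ω * Complex.I) := by
    apply continuous_of_dominated (bound := fun _ => (1 : ℝ))
    · intro u
      exact (Measurable.cexp (((Complex.measurable_ofReal.comp hY).const_mul
        (u : ℂ)).mul_const Complex.I)).aestronglyMeasurable
    · intro u
      filter_upwards with ω
      rw [hnorm1 u (Y ω)]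
    · exact integrable_const 1
    · filter_upwards with ω
      exact Complex.continuous_exp.comp
        ((Complex.continuous_ofReal.mul continuous_const).mul continuous_const)
  have hφYcont : Continuous φY := by
    have : φY = fun u : ℝ => ∫ ω, Complex.exp (u * Y ω * Complex.I) := funext hφY
    rw [this]; exact hcontF
  -- ‖φY u‖ ≤ 1
  have hφYle : ∀ u, ‖φY u‖ ≤ 1 := by
    intro u
    rw [hφY u]
    calc ‖∫ ω, Complex.exp (u * Y ω * Complex.I)‖
        ≤ ∫ ω, ‖Complex.exp (u * Y ω * Complex.I)‖ := norm_integral_le_integral_norm _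
      _ = ∫ _ω : Ω, (1 : ℝ) := by
          congr 1; funext ω; exact hnorm1 u (Y ω)
      _ = 1 := by simp
  -- key pointwise bound
  have hexp1 : (2 : ℝ) ≤ Real.exp 1 := by
    have := Real.add_one_le_exp (1 : ℝ); linarith
  have key : ∀ u, ‖(1 : ℂ) - Complex.exp (lam * Δ * (1 - φY u))‖
      ≤ 2 * (lam * Δ) * Real.exp 2 := by
    intro u
    set z : ℂ := (lam : ℂ) * Δ * (1 - φY u) with hz
    have hznorm : ‖z‖ ≤ 2 * (lam * Δ) := by
      have h1 : ‖(1 : ℂ) - φY u‖ ≤ 2 := by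
        calc ‖(1 : ℂ) - φY u‖ ≤ ‖(1 : ℂ)‖ + ‖φY u‖ := norm_sub_le _ _
          _ ≤ 1 + 1 := by simpa using hφYle u
          _ = 2 := by norm_num
      calc ‖z‖ = ‖((lam : ℂ) * Δ)‖ * ‖(1 : ℂ) - φY u‖ := by rw [hz, norm_mul]
        _ = (lam * Δ) * ‖(1 : ℂ) - φY u‖ := by
            congr 1
            rw [show ((lam : ℂ) * Δ) = ((lam * Δ : ℝ) : ℂ) by push_cast; ring,
              Complex.norm_real, Real.norm_eq_abs, abs_of_pos hld]
        _ ≤ (lam * Δ) * 2 := by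
            exact mul_le_mul_of_nonneg_left h1 hld.le
        _ = 2 * (lam * Δ) := by ring
    set w : ℂ := z / 2 with hw
    have hwnorm : ‖w‖ ≤ 1 := by
      rw [hw]
      rw [norm_div]
      simp only [Complex.norm_ofNat]
      calc ‖z‖ / 2 ≤ 2 * (lam * Δ) / 2 := by linarith
        _ = lam * Δ := by ring
        _ ≤ 1 := hlamΔ
    have hsplit : Complex.exp z - 1 = (Complex.exp w - 1) * (Complex.exp w + 1) := by
      have hzw : z = w + w := by rw [hw]; ring
      rw [hzw, Complex.exp_add]; ring
    have h1 : ‖Complex.exp w - 1‖ ≤ 2 * ‖w‖ := Complex.norm_exp_sub_one_le hwnorm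
    have h2 : ‖Complex.exp w + 1‖ ≤ Real.exp 1 + 1 := by
      calc ‖Complex.exp w + 1‖ ≤ ‖Complex.exp w‖ + ‖(1 : ℂ)‖ := norm_add_le _ _
        _ = ‖Complex.exp w‖ + 1 := by rw [norm_one]
        _ ≤ Real.exp 1 + 1 := by
            gcongr
            rw [Complex.norm_exp]
            exact Real.exp_le_exp.2 ((Complex.abs_re_le_norm w).trans'
              (le_abs_self _) |>.trans hwnorm)
    have hwn : ‖w‖ = ‖z‖ / 2 := by
      rw [hw, norm_div]; simp
    have he2 : Real.exp 1 + 1 ≤ Real.exp 2 := by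
      have : Real.exp 2 = Real.exp 1 * Real.exp 1 := by
        rw [← Real.exp_add]; norm_num
      nlinarith [Real.exp_pos 1]
    calc ‖(1 : ℂ) - Complex.exp z‖ = ‖Complex.exp z - 1‖ := by rw [norm_sub_rev]
      _ = ‖Complex.exp w - 1‖ * ‖Complex.exp w + 1‖ := by rw [hsplit, norm_mul]
      _ ≤ (2 * ‖w‖) * (Real.exp 1 + 1) := by
          apply mul_le_mul h1 h2 (norm_nonneg _)
          positivity
      _ = ‖z‖ * (Real.exp 1 + 1) := by rw [hwn]; ring
      _ ≤ (2 * (lam * Δ)) * Real.exp 2 := by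
          apply mul_le_mul hznorm he2 (by positivity) (by positivity)
      _ = 2 * (lam * Δ) * Real.exp 2 := by ring
  set C : ℝ := (2 * (lam * Δ) * Real.exp 2) ^ 2 with hC
  have hCpos : 0 < C := by positivity
  set g : ℝ → ℝ := fun u =>
    ‖φX u‖ ^ 2 * ‖1 - Complex.exp (lam * Δ * (1 - φY u))‖ ^ 2 with hg
  have hgle : ∀ u, g u ≤ C * ‖φX u‖ ^ 2 := by
    intro u
    have h2 : ‖(1 : ℂ) - Complex.exp (lam * Δ * (1 - φY u))‖ ^ 2 ≤ C := by
      rw [hC]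
      exact pow_le_pow_left₀ (norm_nonneg _) (key u) 2
    calc g u ≤ ‖φX u‖ ^ 2 * C := by
          exact mul_le_mul_of_nonneg_left h2 (by positivity)
      _ = C * ‖φX u‖ ^ 2 := by ring
    -- measurability of g
  have hgmeas : AEStronglyMeasurable g volume := by
    apply hInt.aestronglyMeasurable.mul
    exact ((continuous_const.sub (Complex.continuous_exp.comp
      (continuous_const.mul (continuous_const.sub hφYcont)))).norm.pow 2).aestronglyMeasurable
  have hgint : Integrable g := by
    apply Integrable.mono' (hInt.const_mul C) hgmeas
    filter_upwards with u
    rw [Real.norm_eq_abs, abs_of_nonneg (by positivity)]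
    exact hgle u
  have hmm : (-m : ℝ) ≤ m := by linarith
  have step1 : (∫ u in (-m)..m, g u) ≤ ∫ u in (-m)..m, C * ‖φX u‖ ^ 2 := by
    apply intervalIntegral.integral_mono_on hmm hgint.intervalIntegrable
      (hInt.const_mul C).intervalIntegrable
    intro u _
    exact hgle u
  have step2 : (∫ u in (-m)..m, C * ‖φX u‖ ^ 2) = C * ∫ u in (-m)..m, ‖φX u‖ ^ 2 :=
    intervalIntegral.integral_const_mul _ _
  have step3 : (∫ u in (-m)..m, ‖φX u‖ ^ 2) ≤ ∫ u : ℝ, ‖φX u‖ ^ 2 := by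
    rw [intervalIntegral.integral_of_le hmm]
    apply setIntegral_le_integral hInt
    filter_upwards with u
    positivity
  have hI0 : 0 ≤ ∫ u : ℝ, ‖φX u‖ ^ 2 := by
    apply integral_nonneg; intro u; positivity
  have hconst : (1 / (2 * π)) * C = 2 * Real.exp 4 * (lam * Δ) ^ 2 / π := by
    have h4 : Real.exp 2 * Real.exp 2 = Real.exp 4 := by
      rw [← Real.exp_add]; norm_num
    have h5 : (2 * (lam * Δ) * Real.exp 2) ^ 2 = 4 * Real.exp 4 * (lam * Δ) ^ 2 := by
      rw [← h4]; ring
    rw [hC, h5]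
    field_simp
    ring
  calc (1 / (2 * π)) * ∫ u in (-m)..m, g u
      ≤ (1 / (2 * π)) * (C * ∫ u in (-m)..m, ‖φX u‖ ^ 2) := by
        rw [← step2]
        apply mul_le_mul_of_nonneg_left step1 (by positivity)
    _ ≤ (1 / (2 * π)) * (C * ∫ u : ℝ, ‖φX u‖ ^ 2) := by
        apply mul_le_mul_of_nonneg_left _ (by positivity)
        exact mul_le_mul_of_nonneg_left step3 hCpos.le
    _ = (2 * Real.exp 4 * (lam * Δ) ^ 2 / π) * ∫ u : ℝ, ‖φX u‖ ^ 2 := by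
        rw [← mul_assoc, hconst]
end
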